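/- arXiv:1712.02296 — 3 statements merged into one kernel-verified Lean document; each statement's English description precedes it below -/
import Mathlib

section
/- Let β > 0, let Σ ⊆ ℝ³ be a measurable set contained in the closed ball of center x₀ and radius R > 0, and let E, B : ℝ³ → ℝ³ be measurable vector fields with U(E(x),B(x)) > 0 for all x ∈ Σ, such that u_BI(E(·),B(·)) and U^{-1/2}(E × B) are integrable on Σ. Then for every unit vector k ∈ ℝ³, ∫_Σ u_BI(E(x),B(x)) dx ≥ (1/R) · | ∫_Σ U(E(x),B(x))^{-1/2} ⟨(x − x₀) × (E(x) × B(x)), k⟩ dx |. (No field equations are assumed; this is a quasi-local inequality between the Born–Infeld energy and angular momentum of the region Σ.) -/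
open MeasureTheory Real Filter
open scoped RealInnerProductSpace

noncomputable section

/-- Three-dimensional Euclidean space. -/
abbrev E3 := EuclideanSpace ℝ (Fin 3)

/-- Cross product on `ℝ³`. -/
def cross3 (a b : E3) : E3 :=
  WithLp.toLp 2 ![a 1 * b 2 - a 2 * b 1, a 2 * b 0 - a 0 * b 2, a 0 * b 1 - a 1 * b 0]

/-- The Born–Infeld function `U(E,B) = 1 + ‖B‖²/β² − ‖E‖²/β² − (E⋅B)²/β⁴`. -/
def Ubi (β : ℝ) (E B : E3) : ℝ :=
  1 + ‖B‖ ^ 2 / β ^ 2 - ‖E‖ ^ 2 / β ^ 2 - ⟪E, B⟫ ^ 2 / β ^ 4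

/-- The Born–Infeld energy density `u_BI(E,B) = (β²/√U)(1 + ‖B‖²/β² − √U)`. -/
def uBI (β : ℝ) (E B : E3) : ℝ :=
  β ^ 2 / Real.sqrt (Ubi β E B) * (1 + ‖B‖ ^ 2 / β ^ 2 - Real.sqrt (Ubi β E B))

/-- Lagrange identity for the cross product. -/
lemma cross3_lagrange (a b : E3) : ‖cross3 a b‖^2 = ‖a‖^2 * ‖b‖^2 - ⟪a,b⟫^2 := by
  rw [← real_inner_self_eq_norm_sq, ← real_inner_self_eq_norm_sq, ← real_inner_self_eq_norm_sq]
  simp [cross3, PiLp.inner_apply, Fin.sum_univ_three, EuclideanSpace.norm_sq_eq, Real.norm_eq_abs, sq_abs]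
  ring

/-- The norm of the cross product is bounded by the product of norms. -/
lemma cross3_norm_le (a b : E3) : ‖cross3 a b‖ ≤ ‖a‖ * ‖b‖ := by
  have h := cross3_lagrange a b
  nlinarith [norm_nonneg (cross3 a b), norm_nonneg a, norm_nonneg b, sq_nonneg (⟪a,b⟫ : ℝ),
    mul_nonneg (norm_nonneg a) (norm_nonneg b)]

/-- The key algebraic inequality behind the pointwise momentum–energy comparison. -/
lemma bi_aux (β e2 b2 s P X : ℝ) (hβ : 0 < β) (he2 : 0 ≤ e2) (hb2 : 0 ≤ b2)
    (hP : 0 ≤ P) (hX : 0 ≤ X)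
    (hP2 : P^2 = e2*b2 - s^2)
    (hX2 : X^2 = β^4 + β^2*b2 - β^2*e2 - s^2) :
    P + X ≤ β^2 + b2 := by
  have hC : 0 ≤ β^2 + b2 - e2 := by nlinarith [sq_nonneg X, sq_nonneg s, pow_pos hβ 2]
  have hRHS : 0 ≤ b2*(β^2+b2-e2) + β^2*e2 + 2*s^2 := by positivity
  have h1 : 2*P*X ≤ b2*(β^2+b2-e2) + β^2*e2 + 2*s^2 := by
    have hsq : (2*P*X)^2 ≤ (b2*(β^2+b2-e2) + β^2*e2 + 2*s^2)^2 := by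
      nlinarith [sq_nonneg (b2*(β^2+b2-e2) - β^2*e2), sq_nonneg s, mul_nonneg hb2 hC,
        mul_nonneg (mul_nonneg hb2 hC) (sq_nonneg s), mul_nonneg he2 hb2,
        mul_nonneg (sq_nonneg β) he2, mul_nonneg (sq_nonneg s) (mul_nonneg (sq_nonneg β) hC),
        mul_nonneg (sq_nonneg s) (mul_nonneg he2 hb2), mul_nonneg (sq_nonneg s) (sq_nonneg s)]
    nlinarith [mul_nonneg (mul_nonneg hP hX) (by norm_num : (0:ℝ) ≤ 2), hsq, hRHS]
  nlinarith [h1, sq_nonneg (P+X), pow_pos hβ 2, mul_nonneg hP hX]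

/-- Pointwise: the momentum density `U^{-1/2}‖E×B‖` is dominated by the energy density. -/
lemma bi_key (β : ℝ) (hβ : 0 < β) (a b : E3) (hU : 0 < Ubi β a b) :
    (Real.sqrt (Ubi β a b))⁻¹ * ‖cross3 a b‖ ≤ uBI β a b := by
  set s := Real.sqrt (Ubi β a b) with hs_def
  have hs : 0 < s := Real.sqrt_pos.mpr hU
  have hs2 : s^2 = Ubi β a b := Real.sq_sqrt hU.le
  have hβ2 : (β:ℝ) ≠ 0 := hβ.ne'
  have hmain : ‖cross3 a b‖ + β^2 * s ≤ β^2 + ‖b‖^2 := by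
    apply bi_aux β (‖a‖^2) (‖b‖^2) ⟪a,b⟫ _ _ hβ (sq_nonneg _) (sq_nonneg _)
      (norm_nonneg _) (by positivity) (cross3_lagrange a b)
    have : (β^2*s)^2 = β^4 * Ubi β a b := by rw [mul_pow, hs2]; ring
    rw [this, Ubi]; field_simp
  have huBI : uBI β a b = s⁻¹ * (β^2 + ‖b‖^2 - β^2 * s) := by
    rw [uBI, ← hs_def]; field_simp
  rw [huBI]
  exact mul_le_mul_of_nonneg_left (by linarith) (by positivity)

/-- Measurability of the angular momentum integrand. -/
lemma bi_meas (E B : E3 → E3) (hEm : Measurable E) (hBm : Measurable B) (β : ℝ) (x₀ k : E3) :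
    Measurable (fun x => (Real.sqrt (Ubi β (E x) (B x)))⁻¹ *
      ⟪cross3 (x - x₀) (cross3 (E x) (B x)), k⟫) := by
  have hc : ∀ i : Fin 3, Measurable fun x : E3 => x i := fun i => by measurability
  have h2 : Measurable fun x => (⟪E x, B x⟫ : ℝ) := Measurable.inner (𝕜 := ℝ) hEm hBm
  have h1 : Measurable fun x => Ubi β (E x) (B x) := by
    unfold Ubi
    exact (((measurable_const.add ((hBm.norm.pow measurable_const).div measurable_const)).sub
      ((hEm.norm.pow measurable_const).div measurable_const)).sub
      ((h2.pow measurable_const).div measurable_const))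
  apply ((h1.sqrt.inv)).mul
  have hE : ∀ i, Measurable fun x => E x i := fun i => (hc i).comp hEm
  have hB : ∀ i, Measurable fun x => B x i := fun i => (hc i).comp hBm
  have hX : ∀ i, Measurable fun x : E3 => x i - x₀ i := fun i => (hc i).sub measurable_const
  simp only [PiLp.inner_apply, Fin.sum_univ_three, cross3, RCLike.inner_apply, conj_trivial,
    Matrix.cons_val_zero, Matrix.cons_val_one, Matrix.head_cons, Matrix.cons_val_two,
    Matrix.tail_cons, PiLp.sub_apply]
  apply Measurable.add
  apply Measurable.add
  all_goals apply Measurable.mul measurable_const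
  all_goals apply Measurable.sub
  all_goals apply Measurable.mul
  all_goals first
    | exact hX 0 | exact hX 1 | exact hX 2
    | exact ((hE _).mul (hB _)).sub ((hE _).mul (hB _))

/-- **Quasi-local energy–angular momentum inequality for Born–Infeld electrodynamics.**
For any measurable region `S` contained in the closed ball of center `x₀` and radius
`R > 0`, and measurable fields `E, B` with `U > 0` on `S` whose Born–Infeld energy
density and momentum density `U^{-1/2} (E × B)` are integrable on `S`, the
Born–Infeld energy of `S` dominates `(1/R)` times the absolute value of its
Born–Infeld angular momentum about `x₀` along any unit axis `k`. -/
theorem bornInfeld_quasilocal_energy_angularMomentum_inequality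
    (β : ℝ) (hβ : 0 < β)
    (S : Set E3) (hSm : MeasurableSet S)
    (x₀ : E3) (R : ℝ) (hR : 0 < R) (hball : S ⊆ Metric.closedBall x₀ R)
    (E B : E3 → E3) (hEm : Measurable E) (hBm : Measurable B)
    (hU : ∀ x ∈ S, 0 < Ubi β (E x) (B x))
    (hu_int : IntegrableOn (fun x => uBI β (E x) (B x)) S)
    (hJ_int : IntegrableOn
      (fun x => (Real.sqrt (Ubi β (E x) (B x)))⁻¹ • cross3 (E x) (B x)) S)
    (k : E3) (hk : ‖k‖ = 1) :
    ∫ x in S, uBI β (E x) (B x) ≥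
      (1 / R) * |∫ x in S, (Real.sqrt (Ubi β (E x) (B x)))⁻¹ *
        ⟪cross3 (x - x₀) (cross3 (E x) (B x)), k⟫| := by
  set f : E3 → ℝ := fun x => (Real.sqrt (Ubi β (E x) (B x)))⁻¹ *
    ⟪cross3 (x - x₀) (cross3 (E x) (B x)), k⟫ with hf_def
  -- pointwise bound `|f x| ≤ R * uBI` on `S`
  have hbound : ∀ x ∈ S, |f x| ≤ R * uBI β (E x) (B x) := by
    intro x hx
    have hc : (0:ℝ) ≤ (Real.sqrt (Ubi β (E x) (B x)))⁻¹ := by positivity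
    have h1 : |f x| = (Real.sqrt (Ubi β (E x) (B x)))⁻¹ *
        |⟪cross3 (x - x₀) (cross3 (E x) (B x)), k⟫| := by
      rw [hf_def, abs_mul, abs_of_nonneg hc]
    have h2 : |⟪cross3 (x - x₀) (cross3 (E x) (B x)), k⟫| ≤
        ‖cross3 (x - x₀) (cross3 (E x) (B x))‖ := by
      have := abs_real_inner_le_norm (cross3 (x - x₀) (cross3 (E x) (B x))) k
      rwa [hk, mul_one] at this
    have h3 : ‖cross3 (x - x₀) (cross3 (E x) (B x))‖ ≤ R * ‖cross3 (E x) (B x)‖ := by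
      have hxR : ‖x - x₀‖ ≤ R := by
        have := hball hx
        rwa [Metric.mem_closedBall, dist_eq_norm] at this
      calc ‖cross3 (x - x₀) (cross3 (E x) (B x))‖
          ≤ ‖x - x₀‖ * ‖cross3 (E x) (B x)‖ := cross3_norm_le _ _
        _ ≤ R * ‖cross3 (E x) (B x)‖ :=
            mul_le_mul_of_nonneg_right hxR (norm_nonneg _)
    have h4 : (Real.sqrt (Ubi β (E x) (B x)))⁻¹ * ‖cross3 (E x) (B x)‖ ≤
        uBI β (E x) (B x) := bi_key β hβ _ _ (hU x hx)
    calc |f x| = (Real.sqrt (Ubi β (E x) (B x)))⁻¹ *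
          |⟪cross3 (x - x₀) (cross3 (E x) (B x)), k⟫| := h1
      _ ≤ (Real.sqrt (Ubi β (E x) (B x)))⁻¹ * (R * ‖cross3 (E x) (B x)‖) :=
          mul_le_mul_of_nonneg_left (h2.trans h3) hc
      _ = R * ((Real.sqrt (Ubi β (E x) (B x)))⁻¹ * ‖cross3 (E x) (B x)‖) := by ring
      _ ≤ R * uBI β (E x) (B x) := mul_le_mul_of_nonneg_left h4 hR.le
  -- integrability of `f` on `S`
  have hRu_int : IntegrableOn (fun x => R * uBI β (E x) (B x)) S := hu_int.const_mul R
  have hf_int : IntegrableOn f S := by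
    apply Integrable.mono' hRu_int
      ((bi_meas E B hEm hBm β x₀ k).aestronglyMeasurable)
    filter_upwards [ae_restrict_mem hSm] with x hx
    rw [Real.norm_eq_abs]
    exact hbound x hx
  -- main chain
  have h5 : |∫ x in S, f x| ≤ ∫ x in S, |f x| := by
    simpa [Real.norm_eq_abs] using
      norm_integral_le_integral_norm (μ := volume.restrict S) f
  have h6 : ∫ x in S, |f x| ≤ ∫ x in S, R * uBI β (E x) (B x) :=
    setIntegral_mono_on hf_int.abs hRu_int hSm hbound
  have h7 : ∫ x in S, R * uBI β (E x) (B x) = R * ∫ x in S, uBI β (E x) (B x) :=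
    integral_const_mul R _
  have h8 : |∫ x in S, f x| ≤ R * ∫ x in S, uBI β (E x) (B x) := by
    rw [← h7]; exact h5.trans h6
  rw [ge_iff_le, hf_def]
  calc (1/R) * |∫ x in S, f x| ≤ (1/R) * (R * ∫ x in S, uBI β (E x) (B x)) :=
        mul_le_mul_of_nonneg_left h8 (by positivity)
    _ = ∫ x in S, uBI β (E x) (B x) := by field_simp

end
end

section
/- Let α, γ ≥ 0, c ∈ [−1,1] and t ∈ [0,1], and set U := 1 + γ² − α² − α²γ²c². If U ≥ 0 then 1 + γ² − √U ≥ t·α·γ. (This is the pointwise statement that the Born–Infeld energy density dominates the angular-momentum density: (β²/√U)(1 + γ² − √U) ≥ (t/√U)·β²αγ whenever U > 0.) -/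
open Real

/-- **Pointwise energy–angular momentum bound in Born–Infeld electrodynamics.**
For normalized field strengths `α, γ ≥ 0`, `c ∈ [−1,1]`, normalized distance
`t ∈ [0,1]` and `U = 1 + γ² − α² − α²γ²c² ≥ 0` one has `1 + γ² − √U ≥ tαγ`. -/
theorem bornInfeld_pointwise_energy_dominates_angularMomentum
    (α γ c t : ℝ) (hα : 0 ≤ α) (hγ : 0 ≤ γ)
    (hc : c ∈ Set.Icc (-1 : ℝ) 1) (ht : t ∈ Set.Icc (0 : ℝ) 1)
    (hU : 0 ≤ 1 + γ ^ 2 - α ^ 2 - α ^ 2 * γ ^ 2 * c ^ 2) :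
    1 + γ ^ 2 - Real.sqrt (1 + γ ^ 2 - α ^ 2 - α ^ 2 * γ ^ 2 * c ^ 2) ≥
      t * α * γ := by
  obtain ⟨ht0, ht1⟩ := ht
  have hα2 : α ^ 2 ≤ 1 + γ ^ 2 := by
    nlinarith [mul_nonneg (sq_nonneg α) (sq_nonneg (γ * c))]
  have h1 : 0 ≤ 1 + γ ^ 2 - α * γ := by
    nlinarith [mul_nonneg hα hγ, sq_nonneg γ]
  have h2 : Real.sqrt (1 + γ ^ 2 - α ^ 2 - α ^ 2 * γ ^ 2 * c ^ 2) ≤ 1 + γ ^ 2 - α * γ := by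
    rw [show (1 + γ ^ 2 - α * γ) = Real.sqrt ((1 + γ ^ 2 - α * γ) ^ 2) from
      (Real.sqrt_sq h1).symm]
    apply Real.sqrt_le_sqrt
    nlinarith [sq_nonneg (α - γ), sq_nonneg (α * γ * c), sq_nonneg (γ * (α - γ))]
  have h3 : t * α * γ ≤ α * γ := by nlinarith [mul_nonneg hα hγ]
  linarith
end

section
/- The improper integral I := ∫_{√2}^{∞} y² · ( 2/(1 + y⁴) − ln(1 + y^{-4}) ) dy converges and satisfies I < √2/2. (This numerical bound is exactly the statement that the logarithmic-electrodynamics binding energy 𝓔_log = √(Q³β/(8π√2)) · I of a minimal-radius charged sphere is strictly smaller than the Maxwell binding energy 𝓔_M = Q²/(8πr₀) of the same configuration.) -/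
open MeasureTheory Real

lemma aux_log_lb (x : ℝ) (hx : 0 < x) : x / (1 + x) ≤ Real.log (1 + x) := by
  have h1 : (0:ℝ) < 1 + x := by linarith
  have h := Real.log_le_sub_one_of_pos (show (0:ℝ) < (1+x)⁻¹ by positivity)
  rw [Real.log_inv] at h
  have he : x / (1 + x) = 1 - (1+x)⁻¹ := by field_simp; ring
  linarith [he ▸ le_refl (x / (1+x))]

lemma aux_log_ub (x : ℝ) (hx : 0 < x) : Real.log (1 + x) ≤ x := by
  have h := Real.log_le_sub_one_of_pos (show (0:ℝ) < 1 + x by linarith)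
  linarith

lemma aux_bounds (y : ℝ) (hy : Real.sqrt 2 < y) :
    0 ≤ y ^ 2 * (2 / (1 + y ^ 4) - Real.log (1 + (y ^ 4)⁻¹)) ∧
    y ^ 2 * (2 / (1 + y ^ 4) - Real.log (1 + (y ^ 4)⁻¹)) ≤
      (y ^ 2)⁻¹ - 4/5 * (y ^ 6)⁻¹ := by
  have h1 : (1:ℝ) < Real.sqrt 2 := by
    rw [show (1:ℝ) = Real.sqrt 1 by simp]
    exact Real.sqrt_lt_sqrt (by norm_num) (by norm_num)
  have hy1 : 1 < y := h1.trans hy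
  have hy0 : 0 < y := by linarith
  have hy2 : 2 < y ^ 2 := by
    have := Real.sq_sqrt (by norm_num : (2:ℝ) ≥ 0)
    nlinarith [Real.sqrt_nonneg 2]
  have hy4 : 4 ≤ y ^ 4 := by nlinarith
  set x : ℝ := (y ^ 4)⁻¹ with hxdef
  have hy4pos : (0:ℝ) < y ^ 4 := by positivity
  have hx : 0 < x := by positivity
  have hx4 : x ≤ 1/4 := by
    rw [hxdef]
    rw [inv_le_comm₀ hy4pos (by norm_num)]
    linarith
  have hx1 : (0:ℝ) < 1 + x := by linarith
  have he : 2 / (1 + y ^ 4) = 2 * x / (1 + x) := by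
    rw [hxdef]
    field_simp
    ring
  have hlb := aux_log_lb x hx
  have hub := aux_log_ub x hx
  constructor
  · apply mul_nonneg (by positivity)
    rw [he]
    have : x ≤ 2 * x / (1 + x) := by
      rw [le_div_iff₀ hx1]; nlinarith
    linarith
  · rw [he]
    have key : 2 * x / (1 + x) - Real.log (1 + x) ≤ x - 4/5 * x ^ 2 := by
      have h2 : 2 * x / (1 + x) - x / (1 + x) = x / (1 + x) := by ring
      have h3 : x / (1 + x) ≤ x - 4/5 * x ^ 2 := by
        rw [div_le_iff₀ hx1]; nlinarith
      linarith
    have hy2pos : (0:ℝ) < y ^ 2 := by positivity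
    have hfin : y ^ 2 * (x - 4/5 * x ^ 2) = (y ^ 2)⁻¹ - 4/5 * (y ^ 6)⁻¹ := by
      rw [hxdef]; field_simp
    nlinarith [mul_le_mul_of_nonneg_left key hy2pos.le]

lemma aux_int_pow (n : ℕ) (_hn : 1 < n) (y : ℝ) (hy : Real.sqrt 2 < y) :
    y ^ (-(n:ℝ)) = (y ^ n)⁻¹ := by
  have hy0 : 0 < y := lt_trans (Real.sqrt_pos.mpr (by norm_num)) hy
  rw [Real.rpow_neg hy0.le, Real.rpow_natCast]

/-- **The dimensionless binding-energy integral of logarithmic electrodynamics.**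
The improper integral `I = ∫_{√2}^∞ y²(2/(1+y⁴) − ln(1+y⁻⁴)) dy` converges and
satisfies `I < √2/2`, i.e. the logarithmic binding energy of a minimal-radius
charged sphere is strictly smaller than the corresponding Maxwell binding energy. -/
theorem log_electrodynamics_binding_energy_integral :
    IntegrableOn
      (fun y : ℝ => y ^ 2 * (2 / (1 + y ^ 4) - Real.log (1 + (y ^ 4)⁻¹)))
      (Set.Ioi (Real.sqrt 2)) ∧
    ∫ y in Set.Ioi (Real.sqrt 2),
        y ^ 2 * (2 / (1 + y ^ 4) - Real.log (1 + (y ^ 4)⁻¹)) <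
      Real.sqrt 2 / 2 := by
  have hs2 : (0:ℝ) < Real.sqrt 2 := Real.sqrt_pos.mpr (by norm_num)
  -- integrability of (y^2)⁻¹ and (y^6)⁻¹
  have g2 : IntegrableOn (fun y : ℝ => (y ^ 2)⁻¹) (Set.Ioi (Real.sqrt 2)) := by
    refine (integrableOn_Ioi_rpow_of_lt (by norm_num : (-2:ℝ) < -1) hs2).congr_fun
      (fun y hy => ?_) measurableSet_Ioi
    rw [show (-2:ℝ) = -((2:ℕ):ℝ) by norm_num]; exact aux_int_pow 2 (by norm_num) y hy
  have g6 : IntegrableOn (fun y : ℝ => (y ^ 6)⁻¹) (Set.Ioi (Real.sqrt 2)) := by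
    refine (integrableOn_Ioi_rpow_of_lt (by norm_num : (-6:ℝ) < -1) hs2).congr_fun
      (fun y hy => ?_) measurableSet_Ioi
    rw [show (-6:ℝ) = -((6:ℕ):ℝ) by norm_num]; exact aux_int_pow 6 (by norm_num) y hy
  -- continuity of the integrand on the domain
  have hcont : ContinuousOn
      (fun y : ℝ => y ^ 2 * (2 / (1 + y ^ 4) - Real.log (1 + (y ^ 4)⁻¹)))
      (Set.Ioi (Real.sqrt 2)) := by
    apply ContinuousOn.mul (continuous_pow 2).continuousOn
    apply ContinuousOn.sub
    · exact ContinuousOn.div continuousOn_const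
        ((continuous_const.add (continuous_pow 4)).continuousOn)
        (fun y _ => by positivity)
    · apply ContinuousOn.log
      · exact ContinuousOn.add continuousOn_const
          (ContinuousOn.inv₀ (continuous_pow 4).continuousOn
            (fun y hy => by
              have : 0 < y := lt_trans hs2 hy
              positivity))
      · intro y hy
        have : 0 < y := lt_trans hs2 hy
        positivity
  -- integrability of the integrand via domination
  have hint : IntegrableOn
      (fun y : ℝ => y ^ 2 * (2 / (1 + y ^ 4) - Real.log (1 + (y ^ 4)⁻¹)))
      (Set.Ioi (Real.sqrt 2)) := by
    apply g2.mono' (hcont.aestronglyMeasurable measurableSet_Ioi)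
    filter_upwards [ae_restrict_mem measurableSet_Ioi] with y hy
    obtain ⟨h0, h1⟩ := aux_bounds y hy
    have h6 : (0:ℝ) ≤ (y ^ 6)⁻¹ := by positivity
    rw [Real.norm_eq_abs, abs_of_nonneg h0]
    linarith
  refine ⟨hint, ?_⟩
  -- the dominating function is integrable
  have gdom : IntegrableOn (fun y : ℝ => (y ^ 2)⁻¹ - 4/5 * (y ^ 6)⁻¹)
      (Set.Ioi (Real.sqrt 2)) := g2.sub (g6.const_mul _)
  -- the integral comparison
  have hmono : ∫ y in Set.Ioi (Real.sqrt 2),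
      y ^ 2 * (2 / (1 + y ^ 4) - Real.log (1 + (y ^ 4)⁻¹)) ≤
      ∫ y in Set.Ioi (Real.sqrt 2), ((y ^ 2)⁻¹ - 4/5 * (y ^ 6)⁻¹) :=
    setIntegral_mono_on hint gdom measurableSet_Ioi
      (fun y hy => (aux_bounds y hy).2)
  -- compute the integrals
  have hv2 : ∫ y in Set.Ioi (Real.sqrt 2), (y ^ 2)⁻¹ = Real.sqrt 2 / 2 := by
    rw [setIntegral_congr_fun measurableSet_Ioi
      (fun y hy => (aux_int_pow 2 (by norm_num) y hy).symm)]
    rw [show -((2:ℕ):ℝ) = (-2:ℝ) by norm_num,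
      integral_Ioi_rpow_of_lt (by norm_num) hs2]
    have : Real.sqrt 2 ^ ((-2:ℝ) + 1) = (Real.sqrt 2)⁻¹ := by
      norm_num
      rw [Real.rpow_neg_one]
    rw [this]
    have hss : Real.sqrt 2 * Real.sqrt 2 = 2 := Real.mul_self_sqrt (by norm_num)
    have hne : Real.sqrt 2 ≠ 0 := by positivity
    field_simp
    linarith
  have hv6 : 0 < ∫ y in Set.Ioi (Real.sqrt 2), (y ^ 6)⁻¹ := by
    rw [setIntegral_congr_fun measurableSet_Ioi
      (fun y hy => (aux_int_pow 6 (by norm_num) y hy).symm)]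
    rw [show -((6:ℕ):ℝ) = (-6:ℝ) by norm_num,
      integral_Ioi_rpow_of_lt (by norm_num) hs2]
    have : (0:ℝ) < Real.sqrt 2 ^ ((-6:ℝ) + 1) := Real.rpow_pos_of_pos hs2 _
    have h5 : ((-6:ℝ) + 1) = -5 := by norm_num
    rw [h5] at this ⊢
    have he : -Real.sqrt 2 ^ (-5:ℝ) / (-5) = Real.sqrt 2 ^ (-5:ℝ) / 5 := by ring
    rw [he]
    positivity
  have hsplit : ∫ y in Set.Ioi (Real.sqrt 2), ((y ^ 2)⁻¹ - 4/5 * (y ^ 6)⁻¹) =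
      (∫ y in Set.Ioi (Real.sqrt 2), (y ^ 2)⁻¹) -
      4/5 * ∫ y in Set.Ioi (Real.sqrt 2), (y ^ 6)⁻¹ := by
    rw [integral_sub g2 (g6.const_mul _), integral_const_mul]
  calc ∫ y in Set.Ioi (Real.sqrt 2),
        y ^ 2 * (2 / (1 + y ^ 4) - Real.log (1 + (y ^ 4)⁻¹))
      ≤ ∫ y in Set.Ioi (Real.sqrt 2), ((y ^ 2)⁻¹ - 4/5 * (y ^ 6)⁻¹) := hmono
    _ = Real.sqrt 2 / 2 - 4/5 * ∫ y in Set.Ioi (Real.sqrt 2), (y ^ 6)⁻¹ := by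
        rw [hsplit, hv2]
    _ < Real.sqrt 2 / 2 := by linarith
end
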